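/- For every v ∈ (0,1), the vector of electrical angles (Φ_1, Φ_2, Φ_3, Φ_4) = (−π, −π·v, 0, π·v) is an ambiguous vector for the linear array r = (0,1,3,4): the four angles are pairwise distinct, and the 4×4 steering matrix A with entries A_{m,l} = exp(𝕚·r_m·Φ_l), r = (0,1,3,4), has determinant 0. -/

import Mathlib

open Real Complex

theorem detB_aux (w : ℂ) (hw : w ≠ 0) :
    Matrix.det !![1, 1, 1, 1; -1, w⁻¹, 1, w; -1, w⁻¹^3, 1, w^3; 1, w⁻¹^4, 1, w^4] = 0 := by
  have key : w⁻¹ ^ 15 * w ^ 15 = 1 := by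
    rw [inv_pow, inv_mul_cancel₀ (pow_ne_zero _ hw)]
  simp [Matrix.det_succ_row_zero, Fin.sum_univ_succ, Fin.succAbove, Fin.castSucc,
    Fin.castAdd, Fin.castLE, Fin.succ]
  field_simp
  linear_combination

/-- For every `v ∈ (0,1)` the vector of electrical angles `(-π, -πv, 0, πv)` is an
ambiguous vector for the linear array `r = (0,1,3,4)`: the four angles are pairwise
distinct and the steering matrix has determinant `0`. -/
theorem ambiguity_0134_class_one (v : ℝ) (hv0 : 0 < v) (hv1 : v < 1) :
    Function.Injective (![-π, -π * v, 0, π * v] : Fin 4 → ℝ) ∧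
    Matrix.det (Matrix.of fun m l : Fin 4 =>
      Complex.exp (Complex.I * ((![0, 1, 3, 4] m : ℝ) : ℂ) *
        (((![-π, -π * v, 0, π * v] : Fin 4 → ℝ) l : ℝ) : ℂ))) = 0 := by
  have hp := Real.pi_pos
  constructor
  · have mono : StrictMono (![-π, -π * v, 0, π * v] : Fin 4 → ℝ) := by
      rw [Fin.strictMono_iff_lt_succ]
      intro i
      fin_cases i
      · show -π < -π * v; nlinarith
      · show -π * v < 0; nlinarith
      · show (0:ℝ) < π * v; positivity
    exact mono.injective
  · set w : ℂ := Complex.exp ((π : ℂ) * (v : ℂ) * I) with hwdef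
    have hA : ∀ k : ℤ, Complex.exp ((k : ℂ) * ((π : ℂ) * I)) = (-1) ^ k := fun k => by
      rw [Complex.exp_int_mul, Complex.exp_pi_mul_I]
    have hB : ∀ k : ℤ, Complex.exp ((k : ℂ) * ((π : ℂ) * (v : ℂ) * I)) = w ^ k := fun k => by
      rw [Complex.exp_int_mul, hwdef]
    have hM : (Matrix.of fun m l : Fin 4 =>
        Complex.exp (Complex.I * ((![0, 1, 3, 4] m : ℝ) : ℂ) *
          (((![-π, -π * v, 0, π * v] : Fin 4 → ℝ) l : ℝ) : ℂ))) =
        !![1, 1, 1, 1; -1, w⁻¹, 1, w; -1, w⁻¹^3, 1, w^3; 1, w⁻¹^4, 1, w^4] := by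
      funext m l
      fin_cases m <;> fin_cases l
      · show Complex.exp (I * ((0:ℝ) : ℂ) * ((-π : ℝ) : ℂ)) = 1; simp
      · show Complex.exp (I * ((0:ℝ) : ℂ) * ((-π * v : ℝ) : ℂ)) = 1; simp
      · show Complex.exp (I * ((0:ℝ) : ℂ) * ((0 : ℝ) : ℂ)) = 1; simp
      · show Complex.exp (I * ((0:ℝ) : ℂ) * ((π * v : ℝ) : ℂ)) = 1; simp
      · show Complex.exp (I * ((1:ℝ) : ℂ) * ((-π : ℝ) : ℂ)) = -1
        rw [show Complex.I * ((1:ℝ) : ℂ) * ((-π : ℝ) : ℂ)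
            = ((-1 : ℤ) : ℂ) * ((π : ℂ) * I) by push_cast; ring, hA]; norm_num
      · show Complex.exp (I * ((1:ℝ) : ℂ) * ((-π * v : ℝ) : ℂ)) = w⁻¹
        rw [show Complex.I * ((1:ℝ) : ℂ) * ((-π * v : ℝ) : ℂ)
            = ((-1 : ℤ) : ℂ) * ((π : ℂ) * (v : ℂ) * I) by push_cast; ring, hB]
        simp [zpow_neg]
      · show Complex.exp (I * ((1:ℝ) : ℂ) * ((0 : ℝ) : ℂ)) = 1; simp
      · show Complex.exp (I * ((1:ℝ) : ℂ) * ((π * v : ℝ) : ℂ)) = w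
        rw [show Complex.I * ((1:ℝ) : ℂ) * ((π * v : ℝ) : ℂ)
            = ((1 : ℤ) : ℂ) * ((π : ℂ) * (v : ℂ) * I) by push_cast; ring, hB]
        simp
      · show Complex.exp (I * ((3:ℝ) : ℂ) * ((-π : ℝ) : ℂ)) = -1
        rw [show Complex.I * ((3:ℝ) : ℂ) * ((-π : ℝ) : ℂ)
            = ((-3 : ℤ) : ℂ) * ((π : ℂ) * I) by push_cast; ring, hA]; norm_num
      · show Complex.exp (I * ((3:ℝ) : ℂ) * ((-π * v : ℝ) : ℂ)) = w⁻¹ ^ 3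
        rw [show Complex.I * ((3:ℝ) : ℂ) * ((-π * v : ℝ) : ℂ)
            = ((-3 : ℤ) : ℂ) * ((π : ℂ) * (v : ℂ) * I) by push_cast; ring, hB]
        rw [zpow_neg, inv_pow]; norm_cast
      · show Complex.exp (I * ((3:ℝ) : ℂ) * ((0 : ℝ) : ℂ)) = 1; simp
      · show Complex.exp (I * ((3:ℝ) : ℂ) * ((π * v : ℝ) : ℂ)) = w ^ 3
        rw [show Complex.I * ((3:ℝ) : ℂ) * ((π * v : ℝ) : ℂ)
            = ((3 : ℤ) : ℂ) * ((π : ℂ) * (v : ℂ) * I) by push_cast; ring, hB]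
        norm_cast
      · show Complex.exp (I * ((4:ℝ) : ℂ) * ((-π : ℝ) : ℂ)) = 1
        rw [show Complex.I * ((4:ℝ) : ℂ) * ((-π : ℝ) : ℂ)
            = ((-4 : ℤ) : ℂ) * ((π : ℂ) * I) by push_cast; ring, hA]; norm_num
      · show Complex.exp (I * ((4:ℝ) : ℂ) * ((-π * v : ℝ) : ℂ)) = w⁻¹ ^ 4
        rw [show Complex.I * ((4:ℝ) : ℂ) * ((-π * v : ℝ) : ℂ)
            = ((-4 : ℤ) : ℂ) * ((π : ℂ) * (v : ℂ) * I) by push_cast; ring, hB]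
        rw [zpow_neg, inv_pow]; norm_cast
      · show Complex.exp (I * ((4:ℝ) : ℂ) * ((0 : ℝ) : ℂ)) = 1; simp
      · show Complex.exp (I * ((4:ℝ) : ℂ) * ((π * v : ℝ) : ℂ)) = w ^ 4
        rw [show Complex.I * ((4:ℝ) : ℂ) * ((π * v : ℝ) : ℂ)
            = ((4 : ℤ) : ℂ) * ((π : ℂ) * (v : ℂ) * I) by push_cast; ring, hB]
        norm_cast
    rw [hM]
    exact detB_aux w (Complex.exp_ne_zero _)
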